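/- For every X' = (t',x') ∈ Q there exist R > 0 and 0 < t̄ < t' such that the closure of B_t̄(X',R) is contained in Q and u(t,x) = min over y ∈ Ω of [(t − t̄) L((x − y)/(t − t̄)) + u(t̄, y)] for each (t,x) ∈ B_t̄(X',R). -/

import Mathlib

open scoped RealInnerProductSpace
open Filter Topology Set Metric

noncomputable section

/-- The Lagrangian `L(q) = ½ ⟨A⁻¹ q, q⟩`. -/
def Lag {n : ℕ} (A : Matrix (Fin n) (Fin n) ℝ) (q : EuclideanSpace ℝ (Fin n)) : ℝ :=
  (1 / 2) * ⟪Matrix.toEuclideanLin A⁻¹ q, q⟫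

/-- The Hamiltonian `H(p) = ½ ⟨A p, p⟩`. -/
def Ham {n : ℕ} (A : Matrix (Fin n) (Fin n) ℝ) (p : EuclideanSpace ℝ (Fin n)) : ℝ :=
  (1 / 2) * ⟪Matrix.toEuclideanLin A p, p⟫

/-- Euclidean norm on `ℝ × ℝⁿ`. -/
def pnorm {n : ℕ} (V : ℝ × EuclideanSpace ℝ (Fin n)) : ℝ :=
  Real.sqrt (V.1 ^ 2 + ‖V.2‖ ^ 2)

/-- Euclidean pairing on `ℝ × ℝⁿ`. -/
def pairR {n : ℕ} (P V : ℝ × EuclideanSpace ℝ (Fin n)) : ℝ :=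
  P.1 * V.1 + ⟪P.2, V.2⟫

/-- Open Euclidean ball in `ℝ × ℝⁿ`. -/
def pball {n : ℕ} (X : ℝ × EuclideanSpace ℝ (Fin n)) (R : ℝ) :
    Set (ℝ × EuclideanSpace ℝ (Fin n)) :=
  {Y | pnorm (Y - X) < R}

/-- `B_t̄(X,R) = ((t̄,∞) × ℝⁿ) ∩ B(X,R)`. -/
def tball {n : ℕ} (tbar : ℝ) (X : ℝ × EuclideanSpace ℝ (Fin n)) (R : ℝ) :
    Set (ℝ × EuclideanSpace ℝ (Fin n)) :=
  {Y | tbar < Y.1} ∩ pball X R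

/-- Superdifferential of `w` at `X`:
`P ∈ D⁺w(X)` iff `limsup_{Y→X} (w(Y)−w(X)−⟨P,Y−X⟩)/|Y−X| ≤ 0`. -/
def superDiff {n : ℕ} (w : ℝ × EuclideanSpace ℝ (Fin n) → ℝ)
    (X P : ℝ × EuclideanSpace ℝ (Fin n)) : Prop :=
  ∀ ε > 0, ∀ᶠ Y in 𝓝[≠] X, w Y - w X - pairR P (Y - X) ≤ ε * pnorm (Y - X)

section Aux

variable {n : ℕ} {A : Matrix (Fin n) (Fin n) ℝ}

lemma quad_pos (hA : A.PosDef) {q : EuclideanSpace ℝ (Fin n)} (hq : q ≠ 0) :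
    0 < ⟪Matrix.toEuclideanLin A⁻¹ q, q⟫ := by
  have hB : (A⁻¹).PosDef := (Matrix.posDef_inv_iff).2 hA
  have h := hB.dotProduct_mulVec_pos (x := (q : Fin n → ℝ)) (by simpa using hq)
  simpa [Matrix.toEuclideanLin_apply, PiLp.inner_apply, dotProduct, mul_comm] using h

lemma quad_nonneg (hA : A.PosDef) (q : EuclideanSpace ℝ (Fin n)) :
    0 ≤ ⟪Matrix.toEuclideanLin A⁻¹ q, q⟫ := by
  rcases eq_or_ne q 0 with rfl | hq
  · simp
  · exact (quad_pos hA hq).le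

lemma quad_symm (hA : A.PosDef) (v w : EuclideanSpace ℝ (Fin n)) :
    ⟪Matrix.toEuclideanLin A⁻¹ v, w⟫ = ⟪Matrix.toEuclideanLin A⁻¹ w, v⟫ := by
  have hB : (A⁻¹).IsHermitian := hA.1.inv
  rw [Matrix.isHermitian_iff_isSymmetric] at hB
  rw [hB v w, real_inner_comm]

lemma lag_nonneg (hA : A.PosDef) (q : EuclideanSpace ℝ (Fin n)) : 0 ≤ Lag A q := by
  have := quad_nonneg hA q; unfold Lag; linarith

lemma lag_smul (r : ℝ) (q : EuclideanSpace ℝ (Fin n)) :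
    Lag A (r • q) = r ^ 2 * Lag A q := by
  unfold Lag
  rw [map_smul, real_inner_smul_left, real_inner_smul_right]
  ring

lemma lag_zero : Lag A (0 : EuclideanSpace ℝ (Fin n)) = 0 := by
  unfold Lag; simp

lemma lag_lower (hn : 1 ≤ n) (hA : A.PosDef) :
    ∃ c > 0, ∀ q : EuclideanSpace ℝ (Fin n), c * ‖q‖ ^ 2 ≤ Lag A q := by
  set g : EuclideanSpace ℝ (Fin n) → ℝ := fun q => Lag A q with hg
  have hcont : Continuous g := by
    apply Continuous.mul continuous_const
    exact Continuous.inner ((Matrix.toEuclideanLin A⁻¹).continuous_of_finiteDimensional)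
      continuous_id
  have hsph : (Metric.sphere (0 : EuclideanSpace ℝ (Fin n)) 1).Nonempty := by
    refine ⟨EuclideanSpace.single ⟨0, hn⟩ (1 : ℝ), ?_⟩
    simp [EuclideanSpace.norm_single]
  obtain ⟨q₀, hq₀s, hq₀min'⟩ :=
    (isCompact_sphere (0 : EuclideanSpace ℝ (Fin n)) 1).exists_isMinOn hsph
      hcont.continuousOn
  have hq₀min : ∀ q ∈ Metric.sphere (0 : EuclideanSpace ℝ (Fin n)) 1, g q₀ ≤ g q :=
    fun q hq => hq₀min' hq
  have hq₀norm : ‖q₀‖ = 1 := by simpa using hq₀s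
  have hq₀pos : 0 < g q₀ := by
    have : q₀ ≠ 0 := by intro h; rw [h] at hq₀norm; simp at hq₀norm
    have := quad_pos hA this
    simp only [hg, Lag]; linarith
  refine ⟨g q₀, hq₀pos, fun q => ?_⟩
  rcases eq_or_ne q 0 with rfl | hq
  · simp [hg, lag_zero]
  · have hnq : (0:ℝ) < ‖q‖ := norm_pos_iff.2 hq
    have hu : ‖q‖⁻¹ • q ∈ Metric.sphere (0 : EuclideanSpace ℝ (Fin n)) 1 := by
      simp [norm_smul, abs_of_pos (inv_pos.2 hnq), inv_mul_cancel₀ hnq.ne']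
    have h1 := hq₀min _ hu
    have h2 : g (‖q‖⁻¹ • q) = (‖q‖⁻¹) ^ 2 * g q := lag_smul _ _
    have h3 : (‖q‖⁻¹) ^ 2 * ‖q‖ ^ 2 = 1 := by
      field_simp
    show g q₀ * ‖q‖ ^ 2 ≤ g q
    calc g q₀ * ‖q‖ ^ 2 ≤ g (‖q‖⁻¹ • q) * ‖q‖ ^ 2 :=
          mul_le_mul_of_nonneg_right h1 (sq_nonneg _)
      _ = g q := by rw [h2, mul_right_comm, h3, one_mul]

lemma lag_convex (hA : A.PosDef) {a b : ℝ} (ha : 0 < a) (hb : 0 < b)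
    (v w : EuclideanSpace ℝ (Fin n)) :
    (a + b) * Lag A ((a + b)⁻¹ • (a • v + b • w)) ≤ a * Lag A v + b * Lag A w := by
  have hab : (0:ℝ) < a + b := by linarith
  rw [lag_smul]
  set f := Matrix.toEuclideanLin A⁻¹
  have hvv : Lag A v = (1/2) * ⟪f v, v⟫ := rfl
  have hww : Lag A w = (1/2) * ⟪f w, w⟫ := rfl
  have hexp : Lag A (a • v + b • w) = (1/2) * (a * a * ⟪f v, v⟫ + 2 * (a * b) * ⟪f v, w⟫
      + b * b * ⟪f w, w⟫) := by
    unfold Lag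
    rw [map_add, map_smul, map_smul]
    simp only [inner_add_left, inner_add_right, real_inner_smul_left, real_inner_smul_right]
    rw [quad_symm hA w v]
    ring
  have hpos : 0 ≤ ⟪f (v - w), v - w⟫ := quad_nonneg hA _
  have hpos' : 0 ≤ ⟪f v, v⟫ - 2 * ⟪f v, w⟫ + ⟪f w, w⟫ := by
    have : ⟪f (v - w), v - w⟫ = ⟪f v, v⟫ - 2 * ⟪f v, w⟫ + ⟪f w, w⟫ := by
      rw [map_sub, inner_sub_left, inner_sub_right, inner_sub_right, quad_symm hA w v]
      ring
    linarith [this ▸ hpos]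
  rw [hexp, hvv, hww]
  have key : a * a * ⟪f v, v⟫ + 2 * (a * b) * ⟪f v, w⟫ + b * b * ⟪f w, w⟫
      ≤ (a + b) * (a * ⟪f v, v⟫ + b * ⟪f w, w⟫) := by
    nlinarith [mul_pos ha hb, hpos']
  have h4 : (0:ℝ) < a + b := hab
  calc (a + b) * ((a + b)⁻¹ ^ 2 *
        (1 / 2 * (a * a * ⟪f v, v⟫ + 2 * (a * b) * ⟪f v, w⟫ + b * b * ⟪f w, w⟫)))
      = (a + b)⁻¹ * (1 / 2 * (a * a * ⟪f v, v⟫ + 2 * (a * b) * ⟪f v, w⟫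
        + b * b * ⟪f w, w⟫)) := by
        field_simp
    _ ≤ (a + b)⁻¹ * (1 / 2 * ((a + b) * (a * ⟪f v, v⟫ + b * ⟪f w, w⟫))) := by
        apply mul_le_mul_of_nonneg_left _ (inv_nonneg.2 h4.le)
        linarith
    _ = a * (1 / 2 * ⟪f v, v⟫) + b * (1 / 2 * ⟪f w, w⟫) := by
        field_simp

lemma abs_fst_le_pnorm {n : ℕ} (V : ℝ × EuclideanSpace ℝ (Fin n)) : |V.1| ≤ pnorm V := by
  rw [pnorm, ← Real.sqrt_sq_eq_abs]
  exact Real.sqrt_le_sqrt (by nlinarith [sq_nonneg ‖V.2‖])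

lemma norm_snd_le_pnorm {n : ℕ} (V : ℝ × EuclideanSpace ℝ (Fin n)) : ‖V.2‖ ≤ pnorm V := by
  rw [pnorm]
  have : ‖V.2‖ = Real.sqrt (‖V.2‖ ^ 2) := (Real.sqrt_sq (norm_nonneg _)).symm
  nth_rewrite 1 [this]
  exact Real.sqrt_le_sqrt (by nlinarith [sq_nonneg V.1])

lemma dist_le_pnorm {n : ℕ} (Y X : ℝ × EuclideanSpace ℝ (Fin n)) : dist Y X ≤ pnorm (Y - X) := by
  rw [Prod.dist_eq]
  apply max_le
  · have := abs_fst_le_pnorm (Y - X)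
    rwa [Prod.fst_sub, ← Real.dist_eq] at this
  · have := norm_snd_le_pnorm (Y - X)
    rwa [Prod.snd_sub, ← dist_eq_norm] at this


lemma aux_gap1 {c δ d N L : ℝ} (hc : 0 < c) (hδ : 0 < δ) (hd : 0 < d)
    (hN : 2 * δ ≤ N) (hq1 : c * (d⁻¹ * N) ^ 2 ≤ L) :
    4 * c * δ ^ 2 ≤ d * L * d := by
  have hinv : d * d⁻¹ = 1 := mul_inv_cancel₀ hd.ne'
  have t2 : c * (d⁻¹ * N) ^ 2 * (d * d) ≤ L * (d * d) :=
    mul_le_mul_of_nonneg_right hq1 (by positivity)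
  have e2 : c * (d⁻¹ * N) ^ 2 * (d * d) = c * N ^ 2 := by
    calc c * (d⁻¹ * N) ^ 2 * (d * d) = c * N ^ 2 * (d * d⁻¹) ^ 2 := by ring
      _ = c * N ^ 2 := by rw [hinv]; ring
  have hN2 : (2 * δ) ^ 2 ≤ N ^ 2 := pow_le_pow_left₀ (by positivity) hN 2
  have h3 : c * (2 * δ) ^ 2 ≤ c * N ^ 2 := mul_le_mul_of_nonneg_left hN2 hc.le
  nlinarith [t2, e2, h3]

lemma aux_gap2 {c δ d kM P : ℝ} (hc : 0 < c) (hδ : 0 < δ) (hd : 0 < d) (hden : 0 < kM + 1)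
    (hq4 : 4 * c * δ ^ 2 ≤ P * d) (hP : P ≤ kM) :
    2 * c * δ ^ 2 / (kM + 1) ≤ d := by
  rw [div_le_iff₀ hden]
  nlinarith [mul_le_mul_of_nonneg_right hP hd.le, mul_pos hc (pow_pos hδ 2), hd]

lemma aux_norm {W d a N R D δ η : ℝ} (he : W * d = a * N) (ha : 0 < a) (haR : a < 2 * R)
    (hN0 : 0 ≤ N) (hND : N ≤ 2 * D) (h8 : 8 * R * D ≤ δ * η) (hηd : η ≤ d)
    (hd : 0 < d) (hδ : 0 < δ) (hη : 0 < η) (hR : 0 < R) (hD : 0 < D) : W < δ := by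
  have hmain : W * d < δ * d := by
    rw [he]
    nlinarith [mul_le_mul_of_nonneg_left hND ha.le, mul_lt_mul_of_pos_right haR hD,
      mul_le_mul_of_nonneg_left hηd hδ.le, mul_pos hδ hd]
  exact lt_of_mul_lt_mul_right hmain hd.le

end Aux
theorem statement0
    {n : ℕ} (hn : 1 ≤ n)
    (Ω : Set (EuclideanSpace ℝ (Fin n))) (hΩo : IsOpen Ω)
    (hΩb : Bornology.IsBounded Ω)
    (A : Matrix (Fin n) (Fin n) ℝ) (hA : A.PosDef)
    (Q : Set (ℝ × EuclideanSpace ℝ (Fin n))) (hQ : Q = Ioi (0 : ℝ) ×ˢ Ω)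
    (φ u : ℝ × EuclideanSpace ℝ (Fin n) → ℝ)
    (hφ : ∃ K, LipschitzOnWith K φ (frontier Q))
    (hcomp : ∀ t x s y, (t, x) ∈ frontier Q → (s, y) ∈ frontier Q → 0 ≤ s → s < t →
      φ (t, x) - φ (s, y) ≤ (t - s) * Lag A ((t - s)⁻¹ • (x - y)))
    (hu : ∀ X ∈ closure Q, IsLeast
      {v | ∃ s y, (s, y) ∈ frontier Q ∧ s < X.1 ∧
        v = (X.1 - s) * Lag A ((X.1 - s)⁻¹ • (X.2 - y)) + φ (s, y)} (u X))
    (t' : ℝ) (x' : EuclideanSpace ℝ (Fin n)) (hX' : (t', x') ∈ Q) :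
    ∃ R > 0, ∃ tbar : ℝ, 0 < tbar ∧ tbar < t' ∧
      closure (tball tbar (t', x') R) ⊆ Q ∧
      ∀ X ∈ tball tbar (t', x') R,
        IsLeast {v | ∃ y ∈ Ω,
          v = (X.1 - tbar) * Lag A ((X.1 - tbar)⁻¹ • (X.2 - y)) + u (tbar, y)} (u X) := by
  obtain ⟨K, hK⟩ := hφ
  rw [hQ] at hX'
  have ht'0 : (0:ℝ) < t' := hX'.1
  have hx'Ω : x' ∈ Ω := hX'.2
  -- frontier description
  have hfrQ : frontier Q = (Ici (0:ℝ)) ×ˢ frontier Ω ∪ ({(0:ℝ)} : Set ℝ) ×ˢ closure Ω := by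
    rw [hQ, frontier_prod_eq, closure_Ioi, frontier_Ioi]
  have hfr1 : ∀ s z, ((s, z) : ℝ × EuclideanSpace ℝ (Fin n)) ∈ frontier Q →
      0 ≤ s ∧ z ∈ closure Ω := by
    intro s z hsz
    rw [hfrQ] at hsz
    rcases hsz with h | h
    · exact ⟨h.1, frontier_subset_closure h.2⟩
    · have hs : s = 0 := h.1
      exact ⟨le_of_eq hs.symm, h.2⟩
  have hfr2 : ∀ s z, ((s, z) : ℝ × EuclideanSpace ℝ (Fin n)) ∈ frontier Q → s ≠ 0 →
      z ∈ frontier Ω := by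
    intro s z hsz hs
    rw [hfrQ] at hsz
    rcases hsz with h | h
    · exact h.2
    · exact absurd h.1 hs
  have hfr0 : ∀ w ∈ closure Ω, ((0:ℝ), w) ∈ frontier Q := by
    intro w hw
    rw [hfrQ]
    exact Or.inr ⟨rfl, hw⟩
  -- constants
  obtain ⟨ε, hε0, hballε⟩ := Metric.isOpen_iff.1 hΩo x' hx'Ω
  obtain ⟨δ, hδ0, hball3⟩ : ∃ δ : ℝ, 0 < δ ∧ Metric.ball x' (3 * δ) ⊆ Ω := by
    refine ⟨ε / 3, by linarith only [hε0], ?_⟩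
    have h3 : 3 * (ε / 3) = ε := by ring
    rw [h3]; exact hballε
  obtain ⟨D₀, hD₀⟩ := hΩb.subset_closedBall 0
  obtain ⟨D, hD0, hDcl⟩ : ∃ D : ℝ, 0 < D ∧ closure Ω ⊆ Metric.closedBall 0 D := by
    refine ⟨max D₀ 1, lt_of_lt_of_le one_pos (le_max_right _ _), ?_⟩
    have h1 : Ω ⊆ Metric.closedBall 0 (max D₀ 1) :=
      hD₀.trans (Metric.closedBall_subset_closedBall (le_max_left _ _))
    calc closure Ω ⊆ closure (Metric.closedBall 0 (max D₀ 1)) := closure_mono h1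
      _ = Metric.closedBall 0 (max D₀ 1) := Metric.isClosed_closedBall.closure_eq
  have hnormD : ∀ w ∈ closure Ω, ‖w‖ ≤ D := by
    intro w hw
    simpa [Metric.mem_closedBall, dist_zero_right] using hDcl hw
  obtain ⟨c, hc0, hlag⟩ := lag_lower hn hA
  set Kr := (K : ℝ) with hKrdef
  have hKr0 : (0:ℝ) ≤ Kr := K.coe_nonneg
  set M₀ : ℝ := t' + δ + 2 * D with hM₀def
  have hM₀0 : 0 < M₀ := by rw [hM₀def]; linarith only [ht'0, hδ0, hD0]
  have hden : (0:ℝ) < Kr * M₀ + 1 := by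
    have := mul_nonneg hKr0 hM₀0.le
    linarith only [this]
  set η₁ : ℝ := 2 * c * δ ^ 2 / (Kr * M₀ + 1) with hη₁def
  have hη₁0 : 0 < η₁ := by
    rw [hη₁def]
    exact div_pos (mul_pos (mul_pos two_pos hc0) (pow_pos hδ0 2)) hden
  set η := min (t' / 2) η₁ with hηdef
  have hη0 : 0 < η := lt_min (by linarith only [ht'0]) hη₁0
  set R := min δ (min (t' / 2) (min (η / 3) (δ * η / (8 * D)))) with hRdef
  have hR0 : 0 < R := by
    refine lt_min hδ0 (lt_min (by linarith only [ht'0]) (lt_min (by linarith only [hη0]) ?_))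
    exact div_pos (mul_pos hδ0 hη0) (by linarith only [hD0])
  have hRδ : R ≤ δ := min_le_left _ _
  have hRt : R ≤ t' / 2 := (min_le_right _ _).trans (min_le_left _ _)
  have hRη : R ≤ η / 3 :=
    ((min_le_right _ _).trans (min_le_right _ _)).trans (min_le_left _ _)
  have hRD : R ≤ δ * η / (8 * D) :=
    ((min_le_right _ _).trans (min_le_right _ _)).trans (min_le_right _ _)
  have h8 : 8 * R * D ≤ δ * η := by
    rw [le_div_iff₀ (by linarith only [hD0] : (0:ℝ) < 8 * D)] at hRD
    linarith only [hRD]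
  set tbar := t' - R with htbardef
  have htbar0 : 0 < tbar := by rw [htbardef]; linarith only [hRt, ht'0]
  have htbarlt : tbar < t' := by rw [htbardef]; linarith only [hR0]
  refine ⟨R, hR0, tbar, htbar0, htbarlt, ?_, ?_⟩
  · -- closure of tball is inside Q
    intro Y hY
    have hsub : tball tbar (t', x') R ⊆
        {Z : ℝ × EuclideanSpace ℝ (Fin n) | tbar ≤ Z.1} ∩ Metric.closedBall (t', x') R := by
      rintro Z ⟨hZ1, hZ2⟩
      exact ⟨(le_of_lt hZ1 : tbar ≤ Z.1),
        Metric.mem_closedBall.2 ((dist_le_pnorm Z (t', x')).trans hZ2.le)⟩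
    have hcls : IsClosed
        ({Z : ℝ × EuclideanSpace ℝ (Fin n) | tbar ≤ Z.1} ∩ Metric.closedBall (t', x') R) :=
      (isClosed_le continuous_const continuous_fst).inter Metric.isClosed_closedBall
    have hY' := closure_minimal hsub hcls hY
    have hY1 : tbar ≤ Y.1 := hY'.1
    have hY2 : dist Y.2 x' ≤ R := by
      have h1 : dist Y.2 x' ≤ dist Y (t', x') := by
        rw [Prod.dist_eq]; exact le_max_right _ _
      exact h1.trans (Metric.mem_closedBall.1 hY'.2)
    rw [hQ, Set.mem_prod]
    refine ⟨lt_of_lt_of_le htbar0 hY1, hball3 ?_⟩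
    rw [Metric.mem_ball]
    linarith only [hY2, hRδ, hδ0]
  · -- the dynamic programming principle
    rintro ⟨t, x⟩ ⟨htX, hpX⟩
    have httbar : tbar < t := htX
    have hpn : pnorm (((t, x) : ℝ × EuclideanSpace ℝ (Fin n)) - (t', x')) < R := hpX
    have h1 : |t - t'| < R := by
      have h := (abs_fst_le_pnorm (((t, x) : ℝ × EuclideanSpace ℝ (Fin n)) - (t', x'))).trans_lt hpn
      simpa using h
    have h2 : ‖x - x'‖ < R := by
      have h := (norm_snd_le_pnorm (((t, x) : ℝ × EuclideanSpace ℝ (Fin n)) - (t', x'))).trans_lt hpn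
      simpa using h
    obtain ⟨h1a, h1b⟩ := abs_lt.1 h1
    have ht0 : 0 < t := lt_trans htbar0 httbar
    have htmt : t - tbar < 2 * R := by
      have h3 : tbar = t' - R := htbardef
      linarith only [h1b, h3]
    have hxΩ : x ∈ Ω := by
      apply hball3
      rw [Metric.mem_ball, dist_eq_norm]
      linarith only [h2, hRδ, hδ0]
    have hxcl : x ∈ closure Ω := subset_closure hxΩ
    have hXQ : ((t, x) : ℝ × EuclideanSpace ℝ (Fin n)) ∈ Q := by
      rw [hQ, Set.mem_prod]; exact ⟨ht0, hxΩ⟩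
    have hXcl : ((t, x) : ℝ × EuclideanSpace ℝ (Fin n)) ∈ closure Q := subset_closure hXQ
    -- u(t,x) ≤ φ(0,x)
    have hux : u (t, x) ≤ φ (0, x) := by
      refine (hu (t, x) hXcl).2 ⟨0, x, hfr0 x hxcl, ht0, ?_⟩
      simp [lag_zero]
    -- Lipschitz bound for φ
    have hφbd : ∀ s z, ((s, z) : ℝ × EuclideanSpace ℝ (Fin n)) ∈ frontier Q → s < t →
        φ (0, x) - φ (s, z) ≤ Kr * M₀ := by
      intro s z hsz hst
      obtain ⟨hs0, hzcl⟩ := hfr1 s z hsz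
      have hd : dist ((0:ℝ), x) ((s, z) : ℝ × EuclideanSpace ℝ (Fin n)) ≤ M₀ := by
        rw [Prod.dist_eq]
        apply max_le
        · show dist (0:ℝ) s ≤ M₀
          rw [Real.dist_eq, zero_sub, abs_neg, abs_of_nonneg hs0, hM₀def]
          linarith only [hs0, hst, h1b, hRδ, hD0]
        · show dist x z ≤ M₀
          rw [dist_eq_norm, hM₀def]
          have h3 := norm_sub_le x z
          have hx := hnormD x hxcl
          have hz := hnormD z hzcl
          linarith only [h3, hx, hz, ht'0, hδ0]
      calc φ (0, x) - φ (s, z) ≤ |φ (0, x) - φ (s, z)| := le_abs_self _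
        _ = dist (φ (0, x)) (φ (s, z)) := (Real.dist_eq _ _).symm
        _ ≤ Kr * dist ((0:ℝ), x) ((s, z) : ℝ × EuclideanSpace ℝ (Fin n)) :=
            hK.dist_le_mul _ (hfr0 x hxcl) _ hsz
        _ ≤ Kr * M₀ := mul_le_mul_of_nonneg_left hd hKr0
    -- lower-bound half of the dynamic programming principle
    have hlb : ∀ y ∈ Ω,
        u (t, x) ≤ (t - tbar) * Lag A ((t - tbar)⁻¹ • (x - y)) + u (tbar, y) := by
      intro y hyΩ
      have hyQcl : ((tbar, y) : ℝ × EuclideanSpace ℝ (Fin n)) ∈ closure Q := by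
        apply subset_closure
        rw [hQ, Set.mem_prod]
        exact ⟨htbar0, hyΩ⟩
      obtain ⟨s, z, hszfr, hs, hueq⟩ := (hu (tbar, y) hyQcl).1
      have hs' : s < tbar := hs
      have hueq' : u (tbar, y) = (tbar - s) * Lag A ((tbar - s)⁻¹ • (y - z)) + φ (s, z) := hueq
      have hst : s < t := lt_trans hs' httbar
      have hle : u (t, x) ≤ (t - s) * Lag A ((t - s)⁻¹ • (x - z)) + φ (s, z) :=
        (hu (t, x) hXcl).2 ⟨s, z, hszfr, hst, rfl⟩
      have ha : (0:ℝ) < t - tbar := by linarith only [httbar]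
      have hb : (0:ℝ) < tbar - s := by linarith only [hs']
      have hav : (t - tbar) • ((t - tbar)⁻¹ • (x - y)) + (tbar - s) • ((tbar - s)⁻¹ • (y - z))
          = x - z := by
        rw [smul_inv_smul₀ ha.ne', smul_inv_smul₀ hb.ne', sub_add_sub_cancel]
      have hkey := lag_convex hA ha hb ((t - tbar)⁻¹ • (x - y)) ((tbar - s)⁻¹ • (y - z))
      rw [hav, show (t - tbar) + (tbar - s) = t - s by ring] at hkey
      linarith only [hle, hkey, hueq']
    refine ⟨?_, ?_⟩
    swap
    · rintro w ⟨y', hy', rfl⟩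
      exact hlb y' hy'
    -- the minimum is attained
    obtain ⟨s, z, hszfr, hst, hueq⟩ := (hu (t, x) hXcl).1
    have hst' : s < t := hst
    have hueq' : u (t, x) = (t - s) * Lag A ((t - s)⁻¹ • (x - z)) + φ (s, z) := hueq
    obtain ⟨hs0, hzcl⟩ := hfr1 s z hszfr
    have hd0 : 0 < t - s := by linarith only [hst']
    have hgap : η ≤ t - s := by
      rcases eq_or_ne s 0 with rfl | hsne
      · have h3 : tbar = t' - R := htbardef
        calc η ≤ t' / 2 := min_le_left _ _
          _ ≤ t - 0 := by linarith only [httbar, h3, hRt]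
      · have hzfr : z ∈ frontier Ω := hfr2 s z hszfr hsne
        have hzΩ : z ∉ Ω := by
          rw [hΩo.frontier_eq] at hzfr; exact hzfr.2
        have hxz : 2 * δ ≤ ‖x - z‖ := by
          by_contra h
          push_neg at h
          refine hzΩ (hball3 ?_)
          rw [Metric.mem_ball]
          have hzx : dist z x' ≤ dist z x + dist x x' := dist_triangle _ _ _
          simp only [dist_eq_norm] at hzx ⊢
          have hzx2 : ‖z - x‖ = ‖x - z‖ := norm_sub_rev _ _
          linarith only [hzx, hzx2, h, h2, hRδ]
        have hnv : ‖(t - s)⁻¹ • (x - z)‖ = (t - s)⁻¹ * ‖x - z‖ := by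
          rw [norm_smul, Real.norm_eq_abs, abs_of_pos (inv_pos.2 hd0)]
        have hq1 := hlag ((t - s)⁻¹ • (x - z))
        rw [hnv] at hq1
        have hφb := hφbd s z hszfr hst'
        have hP : (t - s) * Lag A ((t - s)⁻¹ • (x - z)) ≤ Kr * M₀ := by
          calc (t - s) * Lag A ((t - s)⁻¹ • (x - z)) = u (t, x) - φ (s, z) := by
                rw [hueq']; ring
            _ ≤ φ (0, x) - φ (s, z) := sub_le_sub_right hux _
            _ ≤ Kr * M₀ := hφb
        have hq4 := aux_gap1 hc0 hδ0 hd0 hxz hq1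
        have hη₁le : η₁ ≤ t - s := by
          rw [hη₁def]
          exact aux_gap2 hc0 hδ0 hd0 hden hq4 hP
        calc η ≤ η₁ := min_le_right _ _
          _ ≤ t - s := hη₁le
    have hstbar : s < tbar := by
      have h3 : 2 * R ≤ 2 * η / 3 := by linarith only [hRη]
      linarith only [h3, htmt, hgap, hη0]
    have hbb : (0:ℝ) < tbar - s := by linarith only [hstbar]
    have haa : (0:ℝ) < t - tbar := by linarith only [httbar]
    set v := (t - s)⁻¹ • (x - z) with hvdef
    have hxzv : (t - s) • v = x - z := smul_inv_smul₀ hd0.ne' _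
    set y := x - (t - tbar) • v with hydef
    have hxy : x - y = (t - tbar) • v := by rw [hydef]; abel
    have hvy : (t - tbar)⁻¹ • (x - y) = v := by rw [hxy, inv_smul_smul₀ haa.ne']
    have hyz : y - z = (tbar - s) • v := by
      have h3 : y - z = (x - z) - (t - tbar) • v := by rw [hydef]; abel
      rw [h3, ← hxzv, ← sub_smul]
      congr 1
      ring
    have hwy : (tbar - s)⁻¹ • (y - z) = v := by rw [hyz, inv_smul_smul₀ hbb.ne']
    have hnorm1 : ‖x - y‖ = (t - tbar) * ‖v‖ := by
      rw [hxy, norm_smul, Real.norm_eq_abs, abs_of_pos haa]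
    have hnorm2 : ‖x - z‖ = (t - s) * ‖v‖ := by
      rw [← hxzv, norm_smul, Real.norm_eq_abs, abs_of_pos hd0]
    have hnv2 : ‖x - y‖ * (t - s) = (t - tbar) * ‖x - z‖ := by
      rw [hnorm1, hnorm2]; ring
    have hxzD : ‖x - z‖ ≤ 2 * D := by
      have hx := hnormD x hxcl
      have hz := hnormD z hzcl
      have h3 := norm_sub_le x z
      linarith only [hx, hz, h3]
    have hyxδ : ‖x - y‖ < δ :=
      aux_norm hnv2 haa htmt (norm_nonneg _) hxzD h8 hgap hd0 hδ0 hη0 hR0 hD0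
    have hyΩ : y ∈ Ω := by
      apply hball3
      rw [Metric.mem_ball]
      have h3 : dist y x' ≤ dist y x + dist x x' := dist_triangle _ _ _
      simp only [dist_eq_norm] at h3 ⊢
      have h4 : ‖y - x‖ = ‖x - y‖ := norm_sub_rev _ _
      linarith only [h3, h4, hyxδ, h2, hRδ, hδ0]
    have hyQcl : ((tbar, y) : ℝ × EuclideanSpace ℝ (Fin n)) ∈ closure Q := by
      apply subset_closure
      rw [hQ, Set.mem_prod]
      exact ⟨htbar0, hyΩ⟩
    have huy : u (tbar, y) ≤ (tbar - s) * Lag A v + φ (s, z) := by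
      refine (hu (tbar, y) hyQcl).2 ⟨s, z, hszfr, hstbar, ?_⟩
      show (tbar - s) * Lag A v + φ (s, z)
          = (tbar - s) * Lag A ((tbar - s)⁻¹ • (y - z)) + φ (s, z)
      rw [hwy]
    have hlby := hlb y hyΩ
    rw [hvy] at hlby
    refine ⟨y, hyΩ, ?_⟩
    show u (t, x) = (t - tbar) * Lag A ((t - tbar)⁻¹ • (x - y)) + u (tbar, y)
    rw [hvy]
    have hsplit : (t - s) * Lag A v = (t - tbar) * Lag A v + (tbar - s) * Lag A v := by ring
    linarith only [hueq', huy, hlby, hsplit]
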